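/- For |A| > 1, a right congruence ρ on A^k is special (i.e., ρ = τ_I for some ideal I ⊇ A^k) if and only if ρ = τ_{Res(ρ)}, if and only if Λ'_ρ ⊆ Res(ρ), if and only if the map C ↦ lcs(C) from A^k/ρ to A^{≤k} is injective and Λ_ρ is a suffix code. -/
import Mathlib


/-- Words of length `k` over `A`. -/
abbrev Word (A : Type*) (k : ℕ) := {w : List A // w.length = k}

/-- The shift action of a letter: `u.a` is the suffix of length `k` of `u a`. -/
def act {A : Type*} (k : ℕ) (a : A) (u : Word A k) : Word A k :=
  ⟨(u.val ++ [a]).drop ((u.val ++ [a]).length - k), by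
    have h := u.2
    simp only [List.length_drop, List.length_append, List.length_cons,
      List.length_nil, h]
    omega⟩

/-- A right congruence on `A^k`. -/
def IsRC {A : Type*} (k : ℕ) (r : Word A k → Word A k → Prop) : Prop :=
  Equivalence r ∧ ∀ u v : Word A k, r u v → ∀ a : A, r (act k a u) (act k a v)

/-- The relation `τ_I` on `A^k`: a common suffix in `I`. -/
def tauW {A : Type*} (k : ℕ) (I : Set (List A)) (u v : Word A k) : Prop :=
  ∃ w ∈ I, w <:+ u.val ∧ w <:+ v.val

/-- `w` is the longest common suffix of `u` and `v`. -/
def IsLcs {A : Type*} (u v w : List A) : Prop :=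
  w <:+ u ∧ w <:+ v ∧ ∀ w' : List A, w' <:+ u → w' <:+ v → w' <:+ w

/-- `w` is the longest common suffix of the `ρ`-class of `u`. -/
def IsLcsClass {A : Type*} {k : ℕ} (ρ : Word A k → Word A k → Prop)
    (u : Word A k) (w : List A) : Prop :=
  (∀ v : Word A k, ρ u v → w <:+ v.val) ∧
    ∀ w' : List A, (∀ v : Word A k, ρ u v → w' <:+ v.val) → w' <:+ w

/-- `Λ_ρ = { lcs(C) : C ∈ A^k/ρ }`. -/
def Lam {A : Type*} {k : ℕ} (ρ : Word A k → Word A k → Prop) : Set (List A) :=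
  {w | ∃ u : Word A k, IsLcsClass ρ u w}

/-- `Λ'_ρ = { lcs(u,v) : (u,v) ∈ ρ }`. -/
def Lam' {A : Type*} {k : ℕ} (ρ : Word A k → Word A k → Prop) : Set (List A) :=
  {w | ∃ u v : Word A k, ρ u v ∧ IsLcs u.val v.val w}

/-- `Res(ρ)`: words `w` such that all `u, v ∈ A^k` having suffix `w` are
`ρ`-equivalent. -/
def ResSuf {A : Type*} (k : ℕ) (ρ : Word A k → Word A k → Prop) : Set (List A) :=
  {w | ∀ u v : Word A k, w <:+ u.val → w <:+ v.val → ρ u v}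

/-- A suffix code: an antichain with respect to the suffix order. -/
def SuffixCode {A : Type*} (S : Set (List A)) : Prop :=
  ∀ u ∈ S, ∀ v ∈ S, u <:+ v → u = v

/-! ### Auxiliary machinery -/

-- The longest common suffix of two lists, computed recursively.
open scoped Classical in
noncomputable def lcsL {A : Type*} : List A → List A → List A
  | [], _ => []
  | (a :: u), v => if (a :: u) <:+ v then a :: u else lcsL u v

theorem isLcs_lcsL {A : Type*} (u v : List A) : IsLcs u v (lcsL u v) := by
  induction u with
  | nil =>
    simp only [lcsL]
    exact ⟨List.suffix_refl _, List.nil_suffix, fun w' hw' _ => hw'⟩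
  | cons a u ih =>
    rw [lcsL]
    split
    · exact ⟨List.suffix_refl _, by assumption, fun w' hw' _ => hw'⟩
    · obtain ⟨h1, h2, h3⟩ := ih
      refine ⟨h1.trans (List.suffix_cons a u), h2, fun w' hw' hv => ?_⟩
      rcases List.suffix_cons_iff.mp hw' with h | h
      · exact absurd (h ▸ hv) (by assumption)
      · exact h3 w' h hv

/-- The action of a word (iterated letter action). -/
def actWord {A : Type*} (k : ℕ) : List A → Word A k → Word A k
  | [], u => u
  | (a :: z), u => actWord k z (act k a u)

theorem act_val {A : Type*} {k : ℕ} (a : A) (u : Word A k) :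
    (act k a u).val = (u.val ++ [a]).drop 1 := by
  simp [act, u.2]

theorem actWord_val {A : Type*} {k : ℕ} (z : List A) (u : Word A k) :
    (actWord k z u).val = (u.val ++ z).drop z.length := by
  induction z generalizing u with
  | nil => simp [actWord]
  | cons a z ih =>
    rw [actWord, ih, act_val]
    have h1 : (u.val ++ [a]).drop 1 ++ z = (u.val ++ [a] ++ z).drop 1 :=
      (List.drop_append_of_le_length (by simp)).symm
    rw [h1, List.drop_drop]
    have h2 : u.val ++ a :: z = u.val ++ [a] ++ z := by simp
    rw [h2]
    simp [Nat.add_comm]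

theorem actWord_rel {A : Type*} {k : ℕ} {ρ : Word A k → Word A k → Prop}
    (hρ : IsRC k ρ) (z : List A) {u v : Word A k} (h : ρ u v) :
    ρ (actWord k z u) (actWord k z v) := by
  induction z generalizing u v with
  | nil => exact h
  | cons a z ih => exact ih (hρ.2 u v h a)

/-- `Res(ρ)` is a two-sided ideal for any right congruence (given a letter for padding). -/
theorem resSuf_ideal {A : Type*} {k : ℕ} {ρ : Word A k → Word A k → Prop}
    (hρ : IsRC k ρ) (c : A) :
    ∀ p w z : List A, w ∈ ResSuf k ρ → p ++ w ++ z ∈ ResSuf k ρ := by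
  intro p w z hw x y hx hy
  obtain ⟨x₀, hx₀⟩ := hx
  obtain ⟨y₀, hy₀⟩ := hy
  have hxlen : x₀.length + (p.length + (w.length + z.length)) = k := by
    have := x.2; rw [← hx₀] at this; simpa using this
  have hylen : y₀.length + (p.length + (w.length + z.length)) = k := by
    have := y.2; rw [← hy₀] at this; simpa using this
  set r : List A := List.replicate z.length c with hr
  have hx' : (r ++ x₀ ++ p ++ w).length = k := by simp [hr]; omega
  have hy' : (r ++ y₀ ++ p ++ w).length = k := by simp [hr]; omega
  set x' : Word A k := ⟨r ++ x₀ ++ p ++ w, hx'⟩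
  set y' : Word A k := ⟨r ++ y₀ ++ p ++ w, hy'⟩
  have hrel : ρ x' y' := hw x' y' ⟨r ++ x₀ ++ p, by simp [x']⟩ ⟨r ++ y₀ ++ p, by simp [y']⟩
  have hrel2 := actWord_rel hρ z hrel
  have hxv : (actWord k z x') = x := by
    apply Subtype.ext
    rw [actWord_val]
    show (r ++ x₀ ++ p ++ w ++ z).drop z.length = x.val
    rw [← hx₀]
    have : r ++ x₀ ++ p ++ w ++ z = r ++ (x₀ ++ (p ++ w ++ z)) := by simp
    rw [this, List.drop_append_of_le_length (by simp [hr])]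
    simp [hr]
  have hyv : (actWord k z y') = y := by
    apply Subtype.ext
    rw [actWord_val]
    show (r ++ y₀ ++ p ++ w ++ z).drop z.length = y.val
    rw [← hy₀]
    have : r ++ y₀ ++ p ++ w ++ z = r ++ (y₀ ++ (p ++ w ++ z)) := by simp
    rw [this, List.drop_append_of_le_length (by simp [hr])]
    simp [hr]
  rwa [hxv, hyv] at hrel2

theorem suffix_antisymm {A : Type*} {u v : List A} (h1 : u <:+ v) (h2 : v <:+ u) :
    u = v :=
  h1.eq_of_length (Nat.le_antisymm h1.length_le h2.length_le)

theorem isLcsClass_unique {A : Type*} {k : ℕ} {ρ : Word A k → Word A k → Prop}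
    {u : Word A k} {w w' : List A} (h : IsLcsClass ρ u w) (h' : IsLcsClass ρ u w') :
    w = w' :=
  suffix_antisymm (h'.2 w h.1) (h.2 w' h'.1)

theorem isLcsClass_congr {A : Type*} {k : ℕ} {ρ : Word A k → Word A k → Prop}
    (hρ : Equivalence ρ) {u v : Word A k} (huv : ρ u v) {w : List A}
    (h : IsLcsClass ρ u w) : IsLcsClass ρ v w := by
  constructor
  · exact fun x hx => h.1 x (hρ.trans huv hx)
  · exact fun w' hw' => h.2 w' (fun x hx => hw' x (hρ.trans (hρ.symm huv) hx))

/-- Existence of the longest common suffix of a class, realized as a pairwise lcs. -/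
theorem exists_isLcsClass {A : Type*} {k : ℕ} {ρ : Word A k → Word A k → Prop}
    (hρ : Equivalence ρ) (u : Word A k) :
    ∃ (l : List A) (v₀ : Word A k), ρ u v₀ ∧ IsLcs u.val v₀.val l ∧ IsLcsClass ρ u l := by
  classical
  set T : Finset (List A) :=
    (u.val.tails.filter (fun t => decide (∃ v : Word A k, ρ u v ∧ IsLcs u.val v.val t))).toFinset
    with hT
  have hmem : ∀ t, t ∈ T ↔ t <:+ u.val ∧ ∃ v : Word A k, ρ u v ∧ IsLcs u.val v.val t := by
    intro t
    simp [hT, List.mem_filter, List.mem_tails, decide_eq_true_iff]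
  have hne : T.Nonempty :=
    ⟨lcsL u.val u.val, (hmem _).2 ⟨(isLcs_lcsL u.val u.val).1, u, hρ.refl u, isLcs_lcsL _ _⟩⟩
  obtain ⟨l, hl, hlmin⟩ := T.exists_min_image List.length hne
  obtain ⟨hlsuf, v₀, hv₀, hlcs⟩ := (hmem l).1 hl
  refine ⟨l, v₀, hv₀, hlcs, ?_, ?_⟩
  · intro v hv
    have hlv : lcsL u.val v.val ∈ T :=
      (hmem _).2 ⟨(isLcs_lcsL u.val v.val).1, v, hv, isLcs_lcsL _ _⟩
    have hlen := hlmin _ hlv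
    rcases List.suffix_or_suffix_of_suffix hlsuf (isLcs_lcsL u.val v.val).1 with h | h
    · exact h.trans (isLcs_lcsL u.val v.val).2.1
    · have : lcsL u.val v.val = l := h.eq_of_length (Nat.le_antisymm h.length_le hlen)
      exact this ▸ (isLcs_lcsL u.val v.val).2.1
  · intro w' hw'
    exact hlcs.2.2 w' (hw' u (hρ.refl u)) (hw' v₀ hv₀)

/-- for `|A| > 1`, a right congruence `ρ` on `A^k` is special
(`ρ = τ_I` for some ideal `I ⊇ A^k`) iff `ρ = τ_{Res(ρ)}`, iff `Λ'_ρ ⊆ Res(ρ)`,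
iff `lcs : A^k/ρ → A^{≤k}` is injective and `Λ_ρ` is a suffix code. -/
theorem special_rc_characterizations {A : Type*} [Fintype A] (hA : 1 < Fintype.card A)
    (k : ℕ) (hk : 1 ≤ k) (ρ : Word A k → Word A k → Prop) (hρ : IsRC k ρ) :
    ((∃ I : Set (List A), (∀ u v w : List A, w ∈ I → u ++ w ++ v ∈ I) ∧
        (∀ w : List A, w.length = k → w ∈ I) ∧
        (∀ u v : Word A k, ρ u v ↔ tauW k I u v)) ↔
      (∀ u v : Word A k, ρ u v ↔ tauW k (ResSuf k ρ) u v)) ∧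
    ((∀ u v : Word A k, ρ u v ↔ tauW k (ResSuf k ρ) u v) ↔
      Lam' ρ ⊆ ResSuf k ρ) ∧
    (Lam' ρ ⊆ ResSuf k ρ ↔
      ((∀ (u v : Word A k) (w : List A),
          IsLcsClass ρ u w → IsLcsClass ρ v w → ρ u v) ∧
        SuffixCode (Lam ρ))) := by
  obtain ⟨c⟩ : Nonempty A := Fintype.card_pos_iff.mp (by omega)
  have hE := hρ.1
  have tau_imp : ∀ u v : Word A k, tauW k (ResSuf k ρ) u v → ρ u v := by
    rintro u v ⟨w, hw, h1, h2⟩; exact hw u v h1 h2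
  have hIdeal : ∀ p w z : List A, w ∈ ResSuf k ρ → p ++ w ++ z ∈ ResSuf k ρ :=
    resSuf_ideal hρ c
  have lamRes : Lam' ρ ⊆ ResSuf k ρ → ∀ (u : Word A k) (w : List A),
      IsLcsClass ρ u w → w ∈ ResSuf k ρ := by
    intro h u w hw
    obtain ⟨l, v₀, hv₀, hlcs, hcl⟩ := exists_isLcsClass hE u
    have hlw : l = w := isLcsClass_unique hcl hw
    exact hlw ▸ h ⟨u, v₀, hv₀, hlcs⟩
  refine ⟨?_, ?_, ?_⟩
  · -- special ↔ ρ = τ_{Res(ρ)}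
    constructor
    · rintro ⟨I, _, _, hI⟩ u v
      constructor
      · intro huv
        obtain ⟨w, hwI, h1, h2⟩ := (hI u v).1 huv
        exact ⟨w, fun x y hx hy => (hI x y).2 ⟨w, hwI, hx, hy⟩, h1, h2⟩
      · exact tau_imp u v
    · intro h
      refine ⟨ResSuf k ρ, fun u v w hw => hIdeal u w v hw, ?_, h⟩
      intro w hwlen x y hx hy
      have hx' : w = x.val := hx.eq_of_length (by rw [hwlen, x.2])
      have hy' : w = y.val := hy.eq_of_length (by rw [hwlen, y.2])
      have : x = y := Subtype.ext (hx' ▸ hy')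
      exact this ▸ hE.refl x
  · -- ρ = τ_{Res(ρ)} ↔ Λ'_ρ ⊆ Res(ρ)
    constructor
    · intro h w hw
      obtain ⟨u, v, huv, hlcs⟩ := hw
      obtain ⟨w', hw', h1, h2⟩ := (h u v).1 huv
      obtain ⟨p, hp⟩ := hlcs.2.2 w' h1 h2
      have := hIdeal p w' [] hw'
      rwa [List.append_nil, hp] at this
    · intro h u v
      constructor
      · intro huv
        exact ⟨lcsL u.val v.val, h ⟨u, v, huv, isLcs_lcsL _ _⟩,
          (isLcs_lcsL u.val v.val).1, (isLcs_lcsL u.val v.val).2.1⟩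
      · exact tau_imp u v
  · -- Λ'_ρ ⊆ Res(ρ) ↔ injectivity ∧ suffix code
    constructor
    · intro h
      refine ⟨?_, ?_⟩
      · intro u v w hu hv
        exact lamRes h u w hu u v (hu.1 u (hE.refl u)) (hv.1 v (hE.refl v))
      · intro w₁ hw₁ w₂ hw₂ hsuf
        obtain ⟨u₁, h1⟩ := hw₁
        obtain ⟨u₂, h2⟩ := hw₂
        have hres := lamRes h u₁ w₁ h1
        have huv : ρ u₁ u₂ :=
          hres u₁ u₂ (h1.1 u₁ (hE.refl u₁)) (hsuf.trans (h2.1 u₂ (hE.refl u₂)))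
        exact isLcsClass_unique h1 (isLcsClass_congr hE (hE.symm huv) h2)
    · rintro ⟨hinj, hcode⟩ w hw x y hx hy
      obtain ⟨u, v, huv, hlcs⟩ := hw
      obtain ⟨l, v₀, hv₀, _, hcl⟩ := exists_isLcsClass hE u
      have hlw : l <:+ w := hlcs.2.2 l (hcl.1 u (hE.refl u)) (hcl.1 v huv)
      have key : ∀ x : Word A k, w <:+ x.val → IsLcsClass ρ x l := by
        intro x hx
        obtain ⟨lx, vx, hvx, hlcsx, hclx⟩ := exists_isLcsClass hE x
        have hlx : l <:+ x.val := hlw.trans hx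
        have hlxx : lx <:+ x.val := hclx.1 x (hE.refl x)
        have hl : lx = l := by
          rcases List.suffix_or_suffix_of_suffix hlxx hlx with h | h
          · exact hcode lx ⟨x, hclx⟩ l ⟨u, hcl⟩ h
          · exact (hcode l ⟨u, hcl⟩ lx ⟨x, hclx⟩ h).symm
        exact hl ▸ hclx
      exact hinj x y l (key x hx) (key y hy)
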